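/- Let (u, p) solve the continuous mixed problem and (u_H^ms, p_H) ∈ V^ms × (Q_H ∩ L²₀(Ω)) the ideal multiscale approximation defined by a(u_H^ms, v) + (div v, p_H) = 0 for all v ∈ V^ms and (div u_H^ms, q_H) = -(f, q_H) for all q_H ∈ Q_H. Then div u_H^ms = -P_H f, and consequently ‖div(u − u_H^ms)‖_{L²(Ω)} = ‖f − P_H f‖_{L²(Ω)} = inf_{q_H ∈ Q_H} ‖div u − q_H‖_{L²(Ω)}. -/

import Mathlib

open scoped RealInnerProductSpace

/-- **Divergence identity for the ideal multiscale method.**  `H = H₀(div,Ω)` with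
divergence `D : H → S` into the scalar `L²`-space `S`, `QH = Q_H^k` the coarse
pressure space with `L²`-orthogonal projection `P_H = orthogonalProjection QH`,
`L0 = L²₀(Ω)`, `a(u,v) = (A⁻¹u,v)` a bilinear form, and `V^ms` the ideal multiscale
space with `div V^ms ⊆ Q_H`.  If `(u,p)` solves the continuous mixed problem and
`(u_H^ms, p_H) ∈ V^ms × (Q_H ∩ L²₀)` the ideal discrete one, then
`div u_H^ms = -P_H f`, hence `‖div(u − u_H^ms)‖ = ‖f − P_H f‖ = inf_{q_H ∈ Q_H} ‖div u − q_H‖`. -/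
theorem ideal_divergence_identity
    {H S : Type*}
    [NormedAddCommGroup H] [InnerProductSpace ℝ H] [CompleteSpace H]
    [NormedAddCommGroup S] [InnerProductSpace ℝ S] [CompleteSpace S]
    (D : H →L[ℝ] S)
    (QH L0 : Submodule ℝ S) [QH.HasOrthogonalProjection]
    (a : H →ₗ[ℝ] H →ₗ[ℝ] ℝ)
    (Vms : Submodule ℝ H)
    (hdivVms : ∀ v ∈ Vms, D v ∈ QH)
    (hDL0 : ∀ v : H, D v ∈ L0)
    (f : S) (hf : f ∈ L0)
    (u : H) (p : S) (hp : p ∈ L0)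
    (h1 : ∀ v : H, a u v + ⟪D v, p⟫ = 0)
    (h2 : ∀ q ∈ L0, ⟪D u, q⟫ = -⟪f, q⟫)
    (uHms : H) (pH : S) (huHms : uHms ∈ Vms) (hpH : pH ∈ QH ⊓ L0)
    (hd1 : ∀ v ∈ Vms, a uHms v + ⟪D v, pH⟫ = 0)
    (hd2 : ∀ qH ∈ QH, ⟪D uHms, qH⟫ = -⟪f, qH⟫) :
    D uHms = -(QH.orthogonalProjectionOnto f : S) ∧
    ‖D (u - uHms)‖ = ‖f - (QH.orthogonalProjectionOnto f : S)‖ ∧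
    IsLeast ((fun qH : S => ‖D u - qH‖) '' (QH : Set S))
      ‖f - (QH.orthogonalProjectionOnto f : S)‖ := by
  set Pf : S := (QH.orthogonalProjectionOnto f : S) with hPf
  have hPfQH : Pf ∈ QH := (QH.orthogonalProjectionOnto f).2
  -- D u = -f
  have hDu : D u = -f := by
    have hq : D u + f ∈ L0 := L0.add_mem (hDL0 u) hf
    have h := h2 (D u + f) hq
    have h0 : ⟪D u + f, D u + f⟫ = 0 := by
      rw [inner_add_left, h]; ring
    have h1 := inner_self_eq_zero.mp h0
    exact eq_neg_of_add_eq_zero_left h1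
  -- D uHms = -Pf
  have hDms : D uHms = -Pf := by
    have hg : D uHms + Pf ∈ QH := QH.add_mem (hdivVms uHms huHms) hPfQH
    have h := hd2 (D uHms + Pf) hg
    have horth : ⟪f - Pf, D uHms + Pf⟫ = 0 :=
      by have := QH.starProjection_inner_eq_zero f (D uHms + Pf) hg; rwa [Submodule.starProjection_apply] at this
    have hfP : ⟪f, D uHms + Pf⟫ = ⟪Pf, D uHms + Pf⟫ := by
      have := inner_sub_left (𝕜 := ℝ) f Pf (D uHms + Pf)
      linarith [horth, this]
    have h0 : ⟪D uHms + Pf, D uHms + Pf⟫ = 0 := by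
      rw [inner_add_left, h, hfP]; ring
    have h1 := inner_self_eq_zero.mp h0
    exact eq_neg_of_add_eq_zero_left h1
  refine ⟨hDms, ?_, ?_⟩
  · rw [map_sub, hDu, hDms]
    rw [show -f - -Pf = -(f - Pf) by abel, norm_neg]
  · constructor
    · exact ⟨-Pf, QH.neg_mem hPfQH, by simp only; rw [hDu, show -f - -Pf = -(f - Pf) by abel, norm_neg]⟩
    · rintro r ⟨q, hq, rfl⟩
      have : ‖f - Pf‖ ≤ ‖f - (⟨-q, QH.neg_mem hq⟩ : QH)‖ := by
        rw [hPf, ← Submodule.starProjection_apply, Submodule.starProjection_minimal]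
        exact ciInf_le ⟨0, by rintro r ⟨w, rfl⟩; positivity⟩ _
      calc ‖f - Pf‖ ≤ ‖f - -q‖ := this
        _ = ‖D u - q‖ := by rw [hDu, show -f - q = -(f - -q) by abel, norm_neg]
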